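/- Let h be an open unit hemisphere of S^2 with boundary great circle C, and let H be a finite set of open unit hemispheres such that S^2 \ h ⊆ ∪H. Then {g ∩ C : g ∈ H, g ∩ C ≠ ∅} is a covering family of open semicircles of C, and hence contains a subfamily of size at most 4 covering C. -/

import Mathlib

open scoped RealInnerProductSpace

/-- The unit sphere `S² ⊆ ℝ³`. -/
noncomputable def unitSphere : Set (EuclideanSpace ℝ (Fin 3)) := Metric.sphere 0 1

/-- The open unit hemisphere `H(v) = {x ∈ S² | ⟪v, x⟫ > 0}`. -/
noncomputable def openHemisphere (v : EuclideanSpace ℝ (Fin 3)) :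
    Set (EuclideanSpace ℝ (Fin 3)) := {x ∈ unitSphere | 0 < ⟪v, x⟫}

/-- The closed unit hemisphere `{x ∈ S² | ⟪v, x⟫ ≥ 0}`. -/
noncomputable def closedHemisphere (v : EuclideanSpace ℝ (Fin 3)) :
    Set (EuclideanSpace ℝ (Fin 3)) := {x ∈ unitSphere | 0 ≤ ⟪v, x⟫}

/-- The boundary great circle `C = ∂H(v) = {x ∈ S² | ⟪v, x⟫ = 0}`. -/
noncomputable def greatCircle (v : EuclideanSpace ℝ (Fin 3)) :
    Set (EuclideanSpace ℝ (Fin 3)) := {x ∈ unitSphere | ⟪v, x⟫ = 0}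

section Helpers

open FiniteDimensional Module

lemma perp_decomp (v a : EuclideanSpace ℝ (Fin 3)) (hv : v ≠ 0) (ha : a ≠ 0)
    (hva : ⟪v, a⟫ = 0) :
    ∃ n : EuclideanSpace ℝ (Fin 3), n ≠ 0 ∧ ⟪v, n⟫ = 0 ∧ ⟪a, n⟫ = 0 ∧
      ∀ x, ⟪v, x⟫ = 0 → ⟪a, x⟫ = 0 → ∃ γ : ℝ, x = γ • n := by
  set K : Submodule ℝ (EuclideanSpace ℝ (Fin 3)) := Submodule.span ℝ {v, a} with hK
  have hind : LinearIndependent ℝ ![v, a] := by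
    rw [LinearIndependent.pair_iff]
    intro s t hst
    have h1 : ⟪v, s • v + t • a⟫ = 0 := by rw [hst]; simp
    have h2 : ⟪a, s • v + t • a⟫ = 0 := by rw [hst]; simp
    have hav : ⟪a, v⟫ = (0:ℝ) := by rw [real_inner_comm]; exact hva
    rw [inner_add_right, inner_smul_right, inner_smul_right] at h1 h2
    simp only [hva, hav, mul_zero, add_zero, zero_add] at h1 h2
    have hv2 : ⟪v, v⟫ ≠ 0 := fun h => hv (inner_self_eq_zero.mp h)
    have ha2 : ⟪a, a⟫ ≠ 0 := fun h => ha (inner_self_eq_zero.mp h)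
    constructor
    · rcases mul_eq_zero.mp h1 with h | h; exact h; exact absurd h hv2
    · rcases mul_eq_zero.mp h2 with h | h; exact h; exact absurd h ha2
  have hrange : Set.range ![v, a] = {v, a} := by
    simp [Matrix.range_cons, Matrix.range_empty, Set.pair_comm]
  have hKrank : finrank ℝ K = 2 := by
    rw [hK, ← hrange, finrank_span_eq_card hind]
    simp
  have hWrank : finrank ℝ Kᗮ = 1 := by
    have := Submodule.finrank_add_finrank_orthogonal (K := K)
    rw [hKrank, finrank_euclideanSpace_fin] at this
    omega
  have hWne : Kᗮ ≠ ⊥ := by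
    intro h
    rw [h, finrank_bot] at hWrank
    omega
  obtain ⟨n, hnW, hn0⟩ := Submodule.exists_mem_ne_zero_of_ne_bot hWne
  have hmemK : ∀ u ∈ ({v, a} : Set _), u ∈ K := fun u hu => Submodule.subset_span hu
  have hvn : ⟪v, n⟫ = 0 := (Submodule.mem_orthogonal K n).mp hnW v (hmemK v (by simp))
  have han : ⟪a, n⟫ = 0 := (Submodule.mem_orthogonal K n).mp hnW a (hmemK a (by simp))
  refine ⟨n, hn0, hvn, han, fun x hvx hax => ?_⟩
  have hxW : x ∈ Kᗮ := by
    rw [Submodule.mem_orthogonal]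
    intro u hu
    induction hu using Submodule.span_induction with
    | mem u hu => rcases hu with h | h <;> subst h <;> assumption
    | zero => simp
    | add u w _ _ h1 h2 => rw [inner_add_left, h1, h2, add_zero]
    | smul c u _ h1 => rw [inner_smul_left, h1, mul_zero]
  have hspan : Submodule.span ℝ {n} = Kᗮ := by
    apply Submodule.eq_of_le_of_finrank_le
    · rw [Submodule.span_le, Set.singleton_subset_iff]; exact hnW
    · rw [hWrank, finrank_span_singleton hn0]
  rw [← hspan, Submodule.mem_span_singleton] at hxW
  obtain ⟨γ, hγ⟩ := hxW
  exact ⟨γ, hγ.symm⟩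

set_option maxHeartbeats 1000000 in
lemma key_selection (v : EuclideanSpace ℝ (Fin 3)) (hv : ‖v‖ = 1)
    (D : Finset (EuclideanSpace ℝ (Fin 3)))
    (hD : ∀ d ∈ D, d ≠ 0 ∧ ⟪v, d⟫ = 0)
    (hcov : ∀ x : EuclideanSpace ℝ (Fin 3), ⟪v, x⟫ = 0 → x ≠ 0 → ∃ d ∈ D, 0 < ⟪d, x⟫) :
    ∃ R ⊆ D, R.card ≤ 4 ∧
      ∀ x : EuclideanSpace ℝ (Fin 3), ⟪v, x⟫ = 0 → x ≠ 0 → ∃ d ∈ R, 0 < ⟪d, x⟫ := by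
  classical
  have hv0 : v ≠ 0 := fun h => by simp [h] at hv
  have hvv : ⟪v, v⟫ = (1:ℝ) := by
    rw [real_inner_self_eq_norm_mul_norm, hv]; norm_num
  -- a nonzero vector orthogonal to v exists
  have hexists : ∃ x : EuclideanSpace ℝ (Fin 3), ⟪v, x⟫ = 0 ∧ x ≠ 0 := by
    have h1 : finrank ℝ (ℝ ∙ v) = 1 := finrank_span_singleton hv0
    have h2 := Submodule.finrank_add_finrank_orthogonal (K := (ℝ ∙ v))
    rw [h1, finrank_euclideanSpace_fin] at h2
    have hne : (ℝ ∙ v)ᗮ ≠ ⊥ := by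
      intro h; rw [h, finrank_bot] at h2; omega
    obtain ⟨x, hxW, hx0⟩ := Submodule.exists_mem_ne_zero_of_ne_bot hne
    refine ⟨x, ?_, hx0⟩
    exact (Submodule.mem_orthogonal _ x).mp hxW v (Submodule.mem_span_singleton_self v)
  -- step 1 : 0 is in the convex hull of D
  have h0mem : (0 : EuclideanSpace ℝ (Fin 3)) ∈ convexHull ℝ (↑D : Set _) := by
    by_contra h0
    obtain ⟨f, u, hfu, hu0⟩ := geometric_hahn_banach_closed_point
      (convex_convexHull ℝ (↑D : Set (EuclideanSpace ℝ (Fin 3)))) (D.finite_toSet.isCompact_convexHull (𝕜 := ℝ)).isClosed h0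
    rw [map_zero] at hu0
    set y := (InnerProductSpace.toDual ℝ (EuclideanSpace ℝ (Fin 3))).symm f with hy
    have hyz : ∀ z, ⟪y, z⟫ = f z := fun z => InnerProductSpace.toDual_symm_apply
    set q : EuclideanSpace ℝ (Fin 3) := y - ⟪v, y⟫ • v with hq
    have hvq : ⟪v, q⟫ = 0 := by
      rw [hq, inner_sub_right, inner_smul_right, hvv]; ring
    have hqd : ∀ d ∈ D, ⟪q, d⟫ < u := by
      intro d hd
      have : ⟪q, d⟫ = f d := by
        rw [hq, inner_sub_left, inner_smul_left, RCLike.conj_to_real,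
          (hD d hd).2, hyz d]
        ring
      rw [this]
      exact hfu d (subset_convexHull ℝ _ hd)
    obtain ⟨x, hvx, hx0⟩ := hexists
    obtain ⟨d₀, hd₀D, _⟩ := hcov x hvx hx0
    have hq0 : q ≠ 0 := by
      intro h
      have := hqd d₀ hd₀D
      rw [h, inner_zero_left] at this
      linarith
    obtain ⟨d, hdD, hdq⟩ := hcov q hvq hq0
    have := hqd d hdD
    rw [real_inner_comm] at hdq
    linarith
  -- step 2 : Caratheodory
  rw [convexHull_eq_union] at h0mem
  simp only [Set.mem_iUnion, exists_prop] at h0mem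
  obtain ⟨t, htD, hai, h0t⟩ := h0mem
  have ht4 : t.card ≤ 4 := by
    have h1 := hai.card_le_finrank_succ (k := ℝ)
    have h2 := Submodule.finrank_le
      (vectorSpan ℝ (Set.range (Subtype.val : t → EuclideanSpace ℝ (Fin 3))))
    rw [finrank_euclideanSpace_fin] at h2
    rw [Fintype.card_coe] at h1
    omega
  rw [Finset.convexHull_eq] at h0t
  obtain ⟨w, hw0, hw1, hwc⟩ := h0t
  rw [Finset.centerMass_eq_of_sum_1 _ _ hw1] at hwc
  simp only [id] at hwc
  set S : Finset (EuclideanSpace ℝ (Fin 3)) := t.filter (fun d => 0 < w d) with hS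
  have hSD : ∀ d ∈ S, d ∈ D := fun d hd => htD (Finset.mem_of_mem_filter d hd)
  have hsum0 : ∑ d ∈ S, w d • d = 0 := by
    rw [hS, Finset.sum_filter_of_ne, hwc]
    intro d hd hne
    rcases (hw0 d hd).lt_or_eq with h | h
    · exact h
    · exact absurd (by rw [← h, zero_smul]) hne
  have hScard : S.card ≤ 4 := le_trans (Finset.card_filter_le _ _) ht4
  have hSne : S.Nonempty := by
    rw [Finset.nonempty_iff_ne_empty]
    intro h
    have : ∀ d ∈ t, w d = 0 := by
      intro d hd
      by_contra hne
      have : d ∈ S := Finset.mem_filter.mpr ⟨hd, (hw0 d hd).lt_of_ne (Ne.symm hne)⟩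
      rw [h] at this
      exact absurd this (Finset.notMem_empty d)
    rw [Finset.sum_congr rfl this] at hw1
    simp at hw1
  by_cases hB : ∃ d₁ ∈ S, ∃ d₂ ∈ S, ∀ r : ℝ, d₂ ≠ r • d₁
  · -- two independent directions in the support: S itself works
    obtain ⟨d₁, hd₁, d₂, hd₂, hr⟩ := hB
    refine ⟨S, fun d hd => hSD d hd, hScard, ?_⟩
    intro x hvx hx0
    by_contra hno
    push_neg at hno
    have hall : ∀ d ∈ S, ⟪d, x⟫ = 0 := by
      have hsum : ∑ d ∈ S, w d * ⟪d, x⟫ = 0 := by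
        have h : ⟪∑ d ∈ S, w d • d, x⟫ = (0:ℝ) := by rw [hsum0, inner_zero_left]
        rw [sum_inner] at h
        rw [← h]
        exact Finset.sum_congr rfl fun d _ => (real_inner_smul_left d x (w d)).symm
      have hnp : ∀ d ∈ S, w d * ⟪d, x⟫ ≤ 0 := by
        intro d hd
        have h1 : 0 < w d := (Finset.mem_filter.mp hd).2
        exact mul_nonpos_of_nonneg_of_nonpos h1.le (hno d hd)
      intro d hd
      have := (Finset.sum_eq_zero_iff_of_nonpos hnp).mp hsum d hd
      have h1 : 0 < w d := (Finset.mem_filter.mp hd).2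
      exact (mul_eq_zero.mp this).resolve_left (ne_of_gt h1)
    obtain ⟨hd₁0, hvd₁⟩ := hD d₁ (hSD d₁ hd₁)
    obtain ⟨hd₂0, hvd₂⟩ := hD d₂ (hSD d₂ hd₂)
    obtain ⟨n, hn0, hvn, hd₁n, hdec⟩ := perp_decomp v d₁ hv0 hd₁0 hvd₁
    obtain ⟨γ, hγ⟩ := hdec x hvx (hall d₁ hd₁)
    have hd2n : ⟪d₂, n⟫ ≠ 0 := by
      intro h
      obtain ⟨m, hm0, hvm, hnm, hdec2⟩ := perp_decomp v n hv0 hn0 hvn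
      obtain ⟨δ₁, h1⟩ := hdec2 d₁ hvd₁ (by rw [real_inner_comm]; exact hd₁n)
      obtain ⟨δ₂, h2⟩ := hdec2 d₂ hvd₂ (by rw [real_inner_comm]; exact h)
      have hδ₁ : δ₁ ≠ 0 := by
        intro hz; rw [hz, zero_smul] at h1; exact hd₁0 h1
      apply hr (δ₂ * δ₁⁻¹)
      rw [h2, h1, smul_smul]
      congr 1
      field_simp
    have h2x := hall d₂ hd₂
    rw [hγ, real_inner_smul_right] at h2x
    rcases mul_eq_zero.mp h2x with h | h
    · rw [h, zero_smul] at hγ; exact hx0 hγ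
    · exact hd2n h
  · -- all support directions parallel
    push_neg at hB
    obtain ⟨d₁, hd₁⟩ := hSne
    obtain ⟨hd₁0, hvd₁⟩ := hD d₁ (hSD d₁ hd₁)
    have hB' : ∀ d : {x // x ∈ S}, ∃ ρ : ℝ, (d : EuclideanSpace ℝ (Fin 3)) = ρ • d₁ :=
      fun d => hB d₁ hd₁ d d.2
    choose ρ hρ using hB'
    have hsumρ : ∑ d ∈ S.attach, w d * ρ d = 0 := by
      have h : ∑ d ∈ S.attach, w (d:EuclideanSpace ℝ (Fin 3)) • (d:EuclideanSpace ℝ (Fin 3)) = 0 := by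
        rw [Finset.sum_attach S (fun d => w d • d)]; exact hsum0
      have h2 : ∑ d ∈ S.attach, w (d:EuclideanSpace ℝ (Fin 3)) • (d:EuclideanSpace ℝ (Fin 3))
          = (∑ d ∈ S.attach, w d * ρ d) • d₁ := by
        rw [Finset.sum_smul]
        apply Finset.sum_congr rfl
        intro d _
        rw [hρ d, smul_smul]
      rw [h2] at h
      rcases smul_eq_zero.mp h with h | h
      · exact h
      · exact absurd h hd₁0
    have hρ₁ : ρ ⟨d₁, hd₁⟩ = 1 := by
      have := hρ ⟨d₁, hd₁⟩
      simp only at this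
      by_contra hne
      have : (1 - ρ ⟨d₁, hd₁⟩) • d₁ = 0 := by
        rw [sub_smul, one_smul, ← this, sub_self]
      rcases smul_eq_zero.mp this with h | h
      · exact hne (by linarith [sub_eq_zero.mp h])
      · exact hd₁0 h
    have hw₁pos : 0 < w d₁ := (Finset.mem_filter.mp hd₁).2
    have hneg : ∃ d : {x // x ∈ S}, ρ d < 0 := by
      by_contra hc
      push_neg at hc
      have hnn : ∀ d ∈ S.attach, 0 ≤ w (d:EuclideanSpace ℝ (Fin 3)) * ρ d := by
        intro d _
        exact mul_nonneg (Finset.mem_filter.mp d.2).2.le (hc d)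
      have := (Finset.sum_eq_zero_iff_of_nonneg hnn).mp hsumρ ⟨d₁, hd₁⟩ (Finset.mem_attach _ _)
      rw [hρ₁, mul_one] at this
      exact absurd this (ne_of_gt hw₁pos)
    obtain ⟨d₂', hρ₂neg⟩ := hneg
    set d₂ : EuclideanSpace ℝ (Fin 3) := (d₂' : EuclideanSpace ℝ (Fin 3)) with hd₂def
    have hd₂S : d₂ ∈ S := d₂'.2
    have hd₂eq : d₂ = ρ d₂' • d₁ := hρ d₂'
    obtain ⟨n, hn0, hvn, hd₁n, hdec⟩ := perp_decomp v d₁ hv0 hd₁0 hvd₁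
    obtain ⟨d₃, hd₃D, hd₃n⟩ := hcov n hvn hn0
    obtain ⟨d₄, hd₄D, hd₄n⟩ := hcov (-n) (by rw [inner_neg_right, hvn, neg_zero]) (neg_ne_zero.mpr hn0)
    refine ⟨insert d₁ (insert d₂ (insert d₃ {d₄})), ?_, ?_, ?_⟩
    · intro d hd
      simp only [Finset.mem_insert, Finset.mem_singleton] at hd
      rcases hd with h | h | h | h
      · exact h ▸ hSD d₁ hd₁
      · exact h ▸ hSD d₂ hd₂S
      · exact h ▸ hd₃D
      · exact h ▸ hd₄D
    · have h2 : (insert d₃ ({d₄} : Finset _)).card ≤ 2 :=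
        le_trans (Finset.card_insert_le _ _) (by simp)
      have h3 : (insert d₂ (insert d₃ ({d₄} : Finset _))).card ≤ 3 :=
        le_trans (Finset.card_insert_le _ _) (by omega)
      exact le_trans (Finset.card_insert_le _ _) (by omega)
    · intro x hvx hx0
      by_contra hno
      push_neg at hno
      have h1x := hno d₁ (by simp)
      have h2x := hno d₂ (by simp)
      have h3x := hno d₃ (by simp)
      have h4x := hno d₄ (by simp)
      rw [hd₂eq, real_inner_smul_left] at h2x
      have hd₁x : ⟪d₁, x⟫ = 0 := by nlinarith
      obtain ⟨γ, hγ⟩ := hdec x hvx hd₁x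
      rw [hγ, real_inner_smul_right] at h3x h4x
      rw [inner_neg_right] at hd₄n
      have hγ0 : γ = 0 := by nlinarith
      rw [hγ0, zero_smul] at hγ
      exact hx0 hγ

end Helpers

/-- Let `h` be the open hemisphere of a unit vector `v`, with boundary great
circle `C`, and let `H` be a finite set of open unit hemispheres covering
`S² \ h` (equivalently, the closed hemisphere of `-v`).  Then the nonempty
traces `g ∩ C`, `g ∈ H`, are open semicircles of `C` covering `C`, and hence
at most four members of `H` already cover `C`. -/
theorem traces_cover_great_circle
    (v : EuclideanSpace ℝ (Fin 3)) (hv : ‖v‖ = 1)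
    (H : Finset (EuclideanSpace ℝ (Fin 3))) (hH : ∀ w ∈ H, ‖w‖ = 1)
    (hcover : closedHemisphere (-v) ⊆ ⋃ w ∈ H, openHemisphere w) :
    (∀ w ∈ H, (openHemisphere w ∩ greatCircle v).Nonempty →
      ∃ u : EuclideanSpace ℝ (Fin 3), ‖u‖ = 1 ∧ ⟪v, u⟫ = 0 ∧
        openHemisphere w ∩ greatCircle v =
          {x ∈ greatCircle v | 0 < ⟪u, x⟫}) ∧
    greatCircle v ⊆ ⋃ w ∈ H, openHemisphere w ∩ greatCircle v ∧
    ∃ R ⊆ H, R.card ≤ 4 ∧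
      greatCircle v ⊆ ⋃ w ∈ R, openHemisphere w ∩ greatCircle v := by
  classical
  have hvv : ⟪v, v⟫ = (1:ℝ) := by
    rw [real_inner_self_eq_norm_mul_norm, hv]; norm_num
  have hCsub : ∀ x ∈ greatCircle v, x ∈ closedHemisphere (-v) := by
    intro x hx
    exact ⟨hx.1, by rw [inner_neg_left, hx.2, neg_zero]⟩
  -- the projection
  set p : EuclideanSpace ℝ (Fin 3) → EuclideanSpace ℝ (Fin 3) :=
    fun w => w - ⟪v, w⟫ • v with hp
  have hvp : ∀ w, ⟪v, p w⟫ = 0 := by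
    intro w
    rw [hp]
    simp only [inner_sub_right, inner_smul_right, hvv, mul_one, sub_self]
  have hpx : ∀ w x, ⟪v, x⟫ = 0 → ⟪p w, x⟫ = ⟪w, x⟫ := by
    intro w x hx
    rw [hp]
    simp only [inner_sub_left, inner_smul_left, RCLike.conj_to_real, hx, mul_zero, sub_zero]
  refine ⟨?_, ?_, ?_⟩
  · -- part 1 : traces are open semicircles
    intro w _ ⟨x₀, hx₀w, hx₀C⟩
    have hpw0 : p w ≠ 0 := by
      intro h
      have := hpx w x₀ hx₀C.2
      rw [h, inner_zero_left] at this
      have h2 : (0:ℝ) < ⟪w, x₀⟫ := hx₀w.2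
      rw [← this] at h2
      exact lt_irrefl 0 h2
    have hnp : (0:ℝ) < ‖p w‖ := norm_pos_iff.mpr hpw0
    refine ⟨‖p w‖⁻¹ • p w, ?_, ?_, ?_⟩
    · rw [norm_smul, norm_inv, norm_norm, inv_mul_cancel₀ (ne_of_gt hnp)]
    · rw [inner_smul_right, hvp w, mul_zero]
    · ext x
      simp only [Set.mem_inter_iff, Set.mem_setOf_eq, openHemisphere, greatCircle]
      constructor
      · rintro ⟨⟨hxS, hxw⟩, hxC⟩
        refine ⟨hxC, ?_⟩
        rw [real_inner_smul_left, hpx w x hxC.2]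
        positivity
      · rintro ⟨hxC, hxu⟩
        rw [real_inner_smul_left, hpx w x hxC.2] at hxu
        have : 0 < ⟪w, x⟫ := by
          by_contra hle
          push_neg at hle
          nlinarith [inv_pos.mpr hnp]
        exact ⟨⟨hxC.1, this⟩, hxC⟩
  · -- part 2 : the traces cover
    intro x hx
    obtain ⟨w, hwH, hxw⟩ := Set.mem_iUnion₂.mp (hcover (hCsub x hx))
    exact Set.mem_iUnion₂.mpr ⟨w, hwH, hxw, hx⟩
  · -- part 3 : a subcover of size at most 4
    set D : Finset (EuclideanSpace ℝ (Fin 3)) :=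
      (H.image p).filter (fun d => d ≠ 0) with hD
    have hDprop : ∀ d ∈ D, d ≠ 0 ∧ ⟪v, d⟫ = 0 := by
      intro d hd
      rw [hD, Finset.mem_filter, Finset.mem_image] at hd
      obtain ⟨⟨w, _, hwd⟩, hd0⟩ := hd
      exact ⟨hd0, by rw [← hwd]; exact hvp w⟩
    have hcov : ∀ x : EuclideanSpace ℝ (Fin 3), ⟪v, x⟫ = 0 → x ≠ 0 →
        ∃ d ∈ D, 0 < ⟪d, x⟫ := by
      intro x hvx hx0
      set y : EuclideanSpace ℝ (Fin 3) := ‖x‖⁻¹ • x with hy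
      have hny : (0:ℝ) < ‖x‖ := norm_pos_iff.mpr hx0
      have hyS : y ∈ unitSphere := by
        rw [unitSphere, mem_sphere_zero_iff_norm, hy, norm_smul, norm_inv, norm_norm,
          inv_mul_cancel₀ (ne_of_gt hny)]
      have hvy : ⟪v, y⟫ = 0 := by rw [hy, inner_smul_right, hvx, mul_zero]
      have hyH : y ∈ closedHemisphere (-v) :=
        ⟨hyS, by rw [inner_neg_left, hvy, neg_zero]⟩
      obtain ⟨w, hwH, hyw⟩ := Set.mem_iUnion₂.mp (hcover hyH)
      have hpwy : 0 < ⟪p w, y⟫ := by rw [hpx w y hvy]; exact hyw.2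
      have hpw0 : p w ≠ 0 := by
        intro h; rw [h, inner_zero_left] at hpwy; exact lt_irrefl 0 hpwy
      refine ⟨p w, ?_, ?_⟩
      · rw [hD, Finset.mem_filter, Finset.mem_image]
        exact ⟨⟨w, hwH, rfl⟩, hpw0⟩
      · rw [hy, inner_smul_right] at hpwy
        nlinarith [inv_pos.mpr hny]
    obtain ⟨R₀, hR₀D, hR₀card, hR₀cov⟩ := key_selection v hv D hDprop hcov
    set g : EuclideanSpace ℝ (Fin 3) → EuclideanSpace ℝ (Fin 3) :=
      fun d => if h : ∃ w ∈ H, p w = d then h.choose else 0 with hg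
    have hgspec : ∀ d ∈ D, g d ∈ H ∧ p (g d) = d := by
      intro d hd
      rw [hD, Finset.mem_filter, Finset.mem_image] at hd
      have hex : ∃ w ∈ H, p w = d := hd.1
      rw [hg]
      simp only [dif_pos hex]
      exact ⟨hex.choose_spec.1, hex.choose_spec.2⟩
    refine ⟨R₀.image g, ?_, le_trans (Finset.card_image_le) hR₀card, ?_⟩
    · intro w hw
      rw [Finset.mem_image] at hw
      obtain ⟨d, hd, hgd⟩ := hw
      rw [← hgd]
      exact (hgspec d (hR₀D hd)).1
    · intro x hx
      have hx0 : x ≠ 0 := by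
        intro h
        have := hx.1
        rw [h, unitSphere, mem_sphere_zero_iff_norm, norm_zero] at this
        norm_num at this
      obtain ⟨d, hdR₀, hdx⟩ := hR₀cov x hx.2 hx0
      set w := g d with hw
      obtain ⟨hwH, hpwd⟩ := hgspec d (hR₀D hdR₀)
      have hwx : 0 < ⟪w, x⟫ := by
        rw [← hpx w x hx.2, hpwd]
        exact hdx
      exact Set.mem_iUnion₂.mpr ⟨w, Finset.mem_image_of_mem g hdR₀, ⟨hx.1, hwx⟩, hx⟩
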